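/- Two cells i ≠ j in I are independent with respect to L (i.e., π_{{i,j}}(L) = π_{{i}}(L) × π_{{j}}(L)) if and only if L is generated by the complex whose maximal simplices are I∖{i} and I∖{j} (equivalently, the complex of all subsets of I not containing both i and j). -/

import Mathlib

/-- `W` determines output coordinate `i` of `f`: the value `f x i` only
depends on the restriction of `x` to `W`. -/
def Determines {B J A I : Type*} (f : (J → B) → (I → A)) (i : I) (W : Set J) : Prop :=
  ∀ x y : J → B, (∀ j ∈ W, x j = y j) → f x i = f y i

/-- The input window of output coordinate `i`: the intersection of all
determining sets (which, for finite data, is the smallest determining set). -/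
def window {B J A I : Type*} (f : (J → B) → (I → A)) (i : I) : Set J :=
  ⋂₀ {W : Set J | Determines f i W}

/-- The dual window of an input coordinate `j`. -/
def dualWindow {B J A I : Type*} (f : (J → B) → (I → A)) (j : J) : Set I :=
  {i : I | j ∈ window f i}

/-- The communication complex of `f`: `S ∈ K_f` iff `⋂_{i ∈ S} W_f(i) ≠ ∅`
(the empty intersection being all of `J`). -/
def commComplex {B J A I : Type*} (f : (J → B) → (I → A)) : Set (Set I) :=
  {S : Set I | (⋂ i ∈ S, window f i).Nonempty}

/-- A complex `K` over `I` generates the language `L ⊆ A^I` if some function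
`f : B^J → A^I` (with `B, J` finite, `J` nonempty) has image `L` and
communication complex contained in `K`. -/
def Generates {A I : Type*} (K : Set (Set I)) (L : Set (I → A)) : Prop :=
  ∃ (B J : Type) (_ : Finite B) (_ : Finite J) (_ : Nonempty J)
    (f : (J → B) → (I → A)), Set.range f = L ∧ commComplex f ⊆ K

/-- A complex is connected if no nontrivial partition of the vertex set splits
all of its simplices. -/
def ConnectedComplex {I : Type*} (K : Set (Set I)) : Prop :=
  ¬ ∃ I0 : Set I, I0 ≠ ∅ ∧ I0 ≠ Set.univ ∧ ∀ S ∈ K, S ⊆ I0 ∨ S ⊆ I0ᶜ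

/-- A simplicial complex: a downward closed collection of subsets. -/
def IsComplex {I : Type*} (K : Set (Set I)) : Prop :=
  ∀ S ∈ K, ∀ T ⊆ S, T ∈ K

/-- The 1-skeleton of a complex, as a simple graph. -/
def skeletonGraph {I : Type*} (K : Set (Set I)) : SimpleGraph I :=
  SimpleGraph.fromRel (fun i j => ({i, j} : Set I) ∈ K)

/-- The complex associated to a graph: the empty set, the singletons, and the
edges. -/
def treeComplex {I : Type*} (G : SimpleGraph I) : Set (Set I) :=
  {S | S = ∅ ∨ (∃ i, S = {i}) ∨ ∃ i j, G.Adj i j ∧ S = ({i, j} : Set I)}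

/-- The maximal simplices of a complex. -/
def maxSimplices {I : Type*} (K : Set (Set I)) : Set (Set I) :=
  {S | S ∈ K ∧ ∀ T ∈ K, S ⊆ T → S = T}

/-- The image `f_*(K)` of a complex `K` on the input coordinates of `f`:
generated by the unions of dual windows over simplices of `K`. -/
def pushComplex {B J A I : Type*} (f : (J → B) → (I → A)) (K : Set (Set J)) : Set (Set I) :=
  {T : Set I | ∃ S ∈ K, T ⊆ ⋃ j ∈ S, dualWindow f j}



lemma det_inter {B J A I : Type*} {f : (J → B) → (I → A)} {i : I} {W1 W2 : Set J}
    (h1 : Determines f i W1) (h2 : Determines f i W2) : Determines f i (W1 ∩ W2) := by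
  classical
  intro x y hxy
  set z : J → B := fun k => if k ∈ W1 then x k else y k with hz
  have e1 : f x i = f z i := h1 x z (fun k hk => by simp [hz, hk])
  have e2 : f z i = f y i := h2 z y (fun k hk => by
    by_cases hk1 : k ∈ W1
    · simpa [hz, hk1] using hxy k ⟨hk1, hk⟩
    · simp [hz, hk1])
  rw [e1, e2]

lemma det_window {B J A I : Type*} [Finite J] (f : (J → B) → (I → A)) (i : I) :
    Determines f i (window f i) := by
  have key : ∀ s : Set (Set J), s.Finite →
      (∀ W ∈ s, Determines f i W) → Determines f i (⋂₀ s) := by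
    intro s hs
    refine Set.Finite.induction_on (motive := fun s _ => (∀ W ∈ s, Determines f i W) → Determines f i (⋂₀ s)) s hs ?_ ?_
    · intro _
      rw [Set.sInter_empty]
      intro x y hxy
      have : x = y := funext fun k => hxy k trivial
      rw [this]
    · intro W t hWt hft IH hall
      rw [Set.sInter_insert]
      exact det_inter (hall W (Set.mem_insert _ _))
        (IH fun V hV => hall V (Set.mem_insert_of_mem _ hV))
  exact key _ (Set.toFinite _) (fun W hW => hW)

/-- two distinct cells `i, j` are independent w.r.t. `L`
(the projection of `L` to `{i,j}` is the product of the projections to `{i}`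
and `{j}`) iff `L` is generated by the complex of all sets not containing both
`i` and `j` (whose maximal simplices are `I∖{i}` and `I∖{j}`). -/
theorem stmt12 {A I : Type} [Finite A] [Finite I] (L : Set (I → A)) (i j : I)
    (hij : i ≠ j) :
    ({p : A × A | ∃ x ∈ L, p = (x i, x j)} =
      {a | ∃ x ∈ L, x i = a} ×ˢ {a | ∃ x ∈ L, x j = a}) ↔
    Generates {S : Set I | ¬(i ∈ S ∧ j ∈ S)} L := by
  classical
  constructor
  · -- independence → generated
    intro h
    by_cases hL : L.Nonempty
    · obtain ⟨x₀, hx₀⟩ := hL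
      have hex : ∀ u ∈ L, ∀ v ∈ L, ∃ w ∈ L, w i = u i ∧ w j = v j := by
        intro u hu v hv
        have hmem : (u i, v j) ∈
            ({a | ∃ x ∈ L, x i = a} ×ˢ {a | ∃ x ∈ L, x j = a} : Set (A × A)) :=
          ⟨⟨u, hu, rfl⟩, ⟨v, hv, rfl⟩⟩
        rw [← h] at hmem
        obtain ⟨w, hw, hwp⟩ := hmem
        obtain ⟨h1, h2⟩ := Prod.ext_iff.mp hwp
        exact ⟨w, hw, h1.symm, h2.symm⟩
      set clamp : (I → A) → (I → A) := fun u => if u ∈ L then u else x₀ with hclampdef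
      have hclamp : ∀ u, clamp u ∈ L := by
        intro u
        by_cases hu : u ∈ L <;> simp [hclampdef, hu, hx₀]
      have hclamp_id : ∀ u ∈ L, clamp u = u := by
        intro u hu; simp [hclampdef, hu]
      set pick : A → (I → A) → (I → A) := fun a v =>
        if hv : ∃ w ∈ L, w i = a ∧ w j = v j then
          (if v i = a then v else hv.choose) else x₀ with hpickdef
      have ppick_i : ∀ a v, (∃ w ∈ L, w i = a ∧ w j = v j) → pick a v i = a := by
        intro a v hv
        by_cases hva : v i = a
        · simp [hpickdef, hv, hva]
        · simp only [hpickdef, dif_pos hv, if_neg hva]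
          exact hv.choose_spec.2.1
      have ppick_j : ∀ a v, (∃ w ∈ L, w i = a ∧ w j = v j) → pick a v j = v j := by
        intro a v hv
        by_cases hva : v i = a
        · simp [hpickdef, hv, hva]
        · simp only [hpickdef, dif_pos hv, if_neg hva]
          exact hv.choose_spec.2.2
      have ppick_mem : ∀ a v, v ∈ L → pick a v ∈ L := by
        intro a v hvL
        by_cases hv : ∃ w ∈ L, w i = a ∧ w j = v j
        · by_cases hva : v i = a
          · simpa [hpickdef, hv, hva] using hvL
          · simp only [hpickdef, dif_pos hv, if_neg hva]
            exact hv.choose_spec.1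
        · simpa [hpickdef, hv] using hx₀
      have ppick_self : ∀ v ∈ L, pick (v i) v = v := by
        intro v hv
        have hex' : ∃ w ∈ L, w i = v i ∧ w j = v j := ⟨v, hv, rfl, rfl⟩
        simp [hpickdef, hex']
      set f : (Bool → (I → A)) → (I → A) :=
        fun g => pick (clamp (g true) i) (clamp (g false)) with hfdef
      have hexf : ∀ g : Bool → (I → A),
          ∃ w ∈ L, w i = clamp (g true) i ∧ w j = clamp (g false) j :=
        fun g => hex _ (hclamp _) _ (hclamp _)
      have hfi : ∀ g, f g i = clamp (g true) i := fun g => ppick_i _ _ (hexf g)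
      have hfj : ∀ g, f g j = clamp (g false) j := fun g => ppick_j _ _ (hexf g)
      have hrange : Set.range f = L := by
        apply Set.Subset.antisymm
        · rintro _ ⟨g, rfl⟩
          exact ppick_mem _ _ (hclamp _)
        · intro x hx
          refine ⟨fun _ => x, ?_⟩
          simp only [hfdef, hclamp_id x hx]
          exact ppick_self x hx
      have det_true : Determines f i {true} := by
        intro x y hxy
        rw [hfi, hfi, hxy true rfl]
      have det_false : Determines f j {false} := by
        intro x y hxy
        rw [hfj, hfj, hxy false rfl]
      refine ⟨I → A, Bool, inferInstance, inferInstance, inferInstance, f, hrange, ?_⟩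
      rintro S hS ⟨hiS, hjS⟩
      obtain ⟨t, ht⟩ := hS
      have hti : t ∈ window f i := Set.mem_iInter₂.mp ht i hiS
      have htj : t ∈ window f j := Set.mem_iInter₂.mp ht j hjS
      have h1 : t ∈ ({true} : Set Bool) := Set.sInter_subset_of_mem det_true hti
      have h2 : t ∈ ({false} : Set Bool) := Set.sInter_subset_of_mem det_false htj
      simp only [Set.mem_singleton_iff] at h1 h2
      rw [h1] at h2
      exact Bool.noConfusion h2
    · rw [Set.not_nonempty_iff_eq_empty] at hL
      refine ⟨Empty, Unit, inferInstance, inferInstance, inferInstance,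
        fun g => (g ()).elim, ?_, ?_⟩
      · rw [hL, Set.eq_empty_iff_forall_notMem]
        rintro x ⟨g, -⟩
        exact (g ()).elim
      · rintro S ⟨t, ht⟩ ⟨hiS, hjS⟩
        have hdet : Determines (fun g : Unit → Empty => ((g ()).elim : I → A)) i ∅ :=
          fun x _ _ => (x ()).elim
        have hti : t ∈ window (fun g : Unit → Empty => ((g ()).elim : I → A)) i :=
          Set.mem_iInter₂.mp ht i hiS
        exact Set.sInter_subset_of_mem hdet hti
  · -- generated → independence
    rintro ⟨B, J, hB, hJ, hJne, f, hrange, hK⟩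
    have hpairK : ({i, j} : Set I) ∉ commComplex f := by
      intro hmem
      exact hK hmem ⟨Set.mem_insert _ _, Set.mem_insert_of_mem _ rfl⟩
    have hdisj : ∀ t : J, t ∈ window f i → t ∉ window f j := by
      intro t hti htj
      apply hpairK
      exact ⟨t, Set.mem_iInter₂.mpr (by
        rintro k (rfl | hk)
        · exact hti
        · rw [Set.mem_singleton_iff] at hk
          rw [hk]; exact htj)⟩
    ext ⟨a, b⟩
    constructor
    · rintro ⟨x, hx, hp⟩
      obtain ⟨h1, h2⟩ := Prod.ext_iff.mp hp
      exact ⟨⟨x, hx, h1.symm⟩, ⟨x, hx, h2.symm⟩⟩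
    · rintro ⟨⟨x, hx, hxa⟩, ⟨y, hy, hyb⟩⟩
      rw [← hrange] at hx hy
      obtain ⟨u, rfl⟩ := hx
      obtain ⟨v, rfl⟩ := hy
      set z : J → B := fun k => if k ∈ window f i then u k else v k with hz
      have hzi : f z i = f u i :=
        det_window f i z u (fun k hk => by simp [hz, hk])
      have hzj : f z j = f v j :=
        det_window f j z v (fun k hk => by
          have : k ∉ window f i := fun hki => hdisj k hki hk
          simp [hz, this])
      refine ⟨f z, hrange ▸ Set.mem_range_self z, ?_⟩
      rw [hzi, hzj, hxa, hyb]
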